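/- Consider the vector field X on ℝ^{2n} given in coordinates (x, p) by ẋᵢ = ∂h/∂pᵢ, ṗᵢ = -∂h/∂xᵢ + Σ_{j,k} C^k_{ij}(x) p_k ∂h/∂p_j + Σ_j f_{ij}(x) ∂h/∂p_j, where h(x,p) = ½Σ g^{ij}(x)p_ip_j + v(x), the C^k_{ij} are skew in (i,j), and f_{ij} = -f_{ji}. Then for a nowhere-vanishing function ν(x), the divergence of νX with respect to Lebesgue measure equals Σᵢ (∂ν/∂xᵢ - ν Σⱼ C^j_{ij}(x)) ∂h/∂pᵢ. Consequently νX is divergence-free for all momenta p if and only if ∂(ln ν)/∂xᵢ = Σⱼ C^j_{ij}(x) for all i. -/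

import Mathlib

open ContinuousLinearMap in
theorem linDeriv' {n : ℕ} (a : Fin n → ℝ) (p : Fin n → ℝ) (i : Fin n) :
    fderiv ℝ (fun q : Fin n → ℝ => ∑ j, a j * q j) p (Pi.single i 1) = a i := by
  have h : HasFDerivAt (fun q : Fin n → ℝ => ∑ j, a j * q j)
      (∑ j, a j • (proj j : (Fin n → ℝ) →L[ℝ] ℝ)) p := by
    apply HasFDerivAt.fun_sum
    intro j _
    exact ((proj j : (Fin n → ℝ) →L[ℝ] ℝ).hasFDerivAt).const_mul (a j)
  rw [h.fderiv]
  simp [Pi.single_apply, mul_ite]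

open ContinuousLinearMap in
theorem quadDeriv' {n : ℕ} (b : Fin n → Fin n → ℝ) (p : Fin n → ℝ) (i : Fin n) :
    fderiv ℝ (fun q : Fin n → ℝ => ∑ j, ∑ k, b j k * q j * q k) p (Pi.single i 1)
      = (∑ k, b i k * p k) + ∑ j, b j i * p j := by
  have h : HasFDerivAt (fun q : Fin n → ℝ => ∑ j, ∑ k, b j k * q j * q k)
      (∑ j, ∑ k, b j k • (p j • (proj k : (Fin n → ℝ) →L[ℝ] ℝ)
          + p k • (proj j : (Fin n → ℝ) →L[ℝ] ℝ))) p := by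
    apply HasFDerivAt.fun_sum; intro j _
    apply HasFDerivAt.fun_sum; intro k _
    have h1 : HasFDerivAt (fun q : Fin n → ℝ => q j * q k)
        (p j • (proj k : (Fin n → ℝ) →L[ℝ] ℝ) + p k • (proj j : (Fin n → ℝ) →L[ℝ] ℝ)) p :=
      ((proj j : (Fin n → ℝ) →L[ℝ] ℝ).hasFDerivAt).mul ((proj k : (Fin n → ℝ) →L[ℝ] ℝ).hasFDerivAt)
    have := h1.const_mul (b j k)
    simpa [mul_assoc, smul_add] using this
  rw [h.fderiv]
  simp only [ContinuousLinearMap.sum_apply, ContinuousLinearMap.smul_apply,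
    ContinuousLinearMap.add_apply, ContinuousLinearMap.proj_apply, smul_eq_mul,
    mul_add, Finset.sum_add_distrib]
  rw [add_comm]
  congr 1
  · simp [Pi.single_apply, mul_ite]
  · rw [Finset.sum_comm]
    simp [Pi.single_apply, mul_ite]

theorem sum_skew' {n : ℕ} (A : Fin n → Fin n → ℝ) (h : ∀ i j, A i j = -A j i) :
    ∑ i, ∑ j, A i j = 0 := by
  have h1 : ∑ i, ∑ j, A i j = ∑ j, ∑ i, A i j := Finset.sum_comm
  have h2 : ∑ j : Fin n, ∑ i : Fin n, A i j = -∑ i, ∑ j, A i j := by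
    rw [← Finset.sum_neg_distrib]
    exact Finset.sum_congr rfl fun i _ => by
      rw [← Finset.sum_neg_distrib]
      exact Finset.sum_congr rfl fun j _ => by rw [h j i]
  linarith [h1, h2]

theorem quadDiff' {n : ℕ} (b : Fin n → Fin n → ℝ) (p : Fin n → ℝ) :
    DifferentiableAt ℝ (fun q : Fin n → ℝ => ∑ j, ∑ k, b j k * q j * q k) p := by
  apply DifferentiableAt.fun_sum; intro j _
  apply DifferentiableAt.fun_sum; intro k _
  exact (((ContinuousLinearMap.proj j : (Fin n → ℝ) →L[ℝ] ℝ).differentiableAt).const_mul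
    (b j k)).mul ((ContinuousLinearMap.proj k : (Fin n → ℝ) →L[ℝ] ℝ).differentiableAt)

theorem linDiff' {n : ℕ} (a : Fin n → ℝ) (p : Fin n → ℝ) :
    DifferentiableAt ℝ (fun q : Fin n → ℝ => ∑ j, a j * q j) p := by
  apply DifferentiableAt.fun_sum; intro j _
  exact ((ContinuousLinearMap.proj j : (Fin n → ℝ) →L[ℝ] ℝ).differentiableAt).const_mul (a j)



/-- `∂h/∂pᵢ = Σⱼ g^{ij}(x)pⱼ` for `h(x,p) = ½Σ g^{ij}(x)pᵢpⱼ + v(x)`. -/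
def hpDeriv {n : ℕ} (g : (Fin n → ℝ) → Fin n → Fin n → ℝ)
    (x p : Fin n → ℝ) (i : Fin n) : ℝ :=
  ∑ j, g x i j * p j

/-- `∂h/∂xᵢ` for `h(x,p) = ½Σ g^{jk}(x)pⱼp_k + v(x)`. -/
noncomputable def hxDeriv {n : ℕ} (g : (Fin n → ℝ) → Fin n → Fin n → ℝ)
    (v : (Fin n → ℝ) → ℝ) (x p : Fin n → ℝ) (i : Fin n) : ℝ :=
  fderiv ℝ (fun y => (1/2 : ℝ) * ∑ j, ∑ k, g y j k * p j * p k + v y) x (Pi.single i 1)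

/-- The `p`-component of the reduced gyroscopic Chaplygin vector field:
`ṗᵢ = -∂h/∂xᵢ + Σ_{j,k} C^k_{ij} p_k ∂h/∂pⱼ + Σⱼ f_{ij} ∂h/∂pⱼ`. -/
noncomputable def XpField {n : ℕ} (g : (Fin n → ℝ) → Fin n → Fin n → ℝ)
    (v : (Fin n → ℝ) → ℝ) (C : (Fin n → ℝ) → Fin n → Fin n → Fin n → ℝ)
    (f : (Fin n → ℝ) → Fin n → Fin n → ℝ) (x p : Fin n → ℝ) (i : Fin n) : ℝ :=
  -hxDeriv g v x p i + (∑ k, ∑ j, C x k i j * p k * hpDeriv g x p j)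
    + ∑ j, f x i j * hpDeriv g x p j

/-- The divergence of `ν·X` with respect to the Lebesgue measure `dx dp`. -/
noncomputable def divNuX {n : ℕ} (g : (Fin n → ℝ) → Fin n → Fin n → ℝ)
    (v ν : (Fin n → ℝ) → ℝ) (C : (Fin n → ℝ) → Fin n → Fin n → Fin n → ℝ)
    (f : (Fin n → ℝ) → Fin n → Fin n → ℝ) (x p : Fin n → ℝ) : ℝ :=
  (∑ i, fderiv ℝ (fun y => ν y * hpDeriv g y p i) x (Pi.single i 1))
    + ∑ i, fderiv ℝ (fun q => ν x * XpField g v C f x q i) p (Pi.single i 1)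

theorem hx_eq {n : ℕ} (g : (Fin n → ℝ) → Fin n → Fin n → ℝ)
    (v : (Fin n → ℝ) → ℝ)
    (hg_diff : ∀ i j, Differentiable ℝ (fun x => g x i j))
    (hv_diff : Differentiable ℝ v) (x q : Fin n → ℝ) (i : Fin n) :
    hxDeriv g v x q i
      = (1/2 : ℝ) * (∑ j, ∑ k, fderiv ℝ (fun y => g y j k) x (Pi.single i 1) * q j * q k)
        + fderiv ℝ v x (Pi.single i 1) := by
  have hjk : ∀ j k : Fin n, DifferentiableAt ℝ (fun y => g y j k * q j * q k) x :=
    fun j k => ((hg_diff j k x).mul_const _).mul_const _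
  have hS : DifferentiableAt ℝ (fun y => ∑ j, ∑ k, g y j k * q j * q k) x :=
    DifferentiableAt.fun_sum fun j _ => DifferentiableAt.fun_sum fun k _ => hjk j k
  unfold hxDeriv
  rw [fderiv_fun_add (hS.const_mul _) (hv_diff x), ContinuousLinearMap.add_apply,
    fderiv_const_mul hS, ContinuousLinearMap.smul_apply, smul_eq_mul,
    fderiv_fun_sum (fun j _ => DifferentiableAt.fun_sum fun k _ => hjk j k),
    ContinuousLinearMap.sum_apply]
  congr 2
  apply Finset.sum_congr rfl; intro j _
  rw [fderiv_fun_sum (fun k _ => hjk j k), ContinuousLinearMap.sum_apply]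
  apply Finset.sum_congr rfl; intro k _
  rw [fderiv_mul_const ((hg_diff j k x).mul_const _), ContinuousLinearMap.smul_apply, smul_eq_mul,
    fderiv_mul_const (hg_diff j k x), ContinuousLinearMap.smul_apply, smul_eq_mul]
  ring

theorem xpart_eq {n : ℕ} (g : (Fin n → ℝ) → Fin n → Fin n → ℝ)
    (ν : (Fin n → ℝ) → ℝ)
    (hg_diff : ∀ i j, Differentiable ℝ (fun x => g x i j))
    (hν_diff : Differentiable ℝ ν) (x p : Fin n → ℝ) (i : Fin n) :
    fderiv ℝ (fun y => ν y * hpDeriv g y p i) x (Pi.single i 1)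
      = fderiv ℝ ν x (Pi.single i 1) * hpDeriv g x p i
        + ν x * ∑ j, fderiv ℝ (fun y => g y i j) x (Pi.single i 1) * p j := by
  simp only [hpDeriv]
  have hhp : DifferentiableAt ℝ (fun y => ∑ j, g y i j * p j) x :=
    DifferentiableAt.fun_sum fun j _ => (hg_diff i j x).mul_const _
  rw [fderiv_fun_mul (hν_diff x) hhp, ContinuousLinearMap.add_apply,
    ContinuousLinearMap.smul_apply, ContinuousLinearMap.smul_apply, smul_eq_mul, smul_eq_mul,
    fderiv_fun_sum (fun j _ => (hg_diff i j x).mul_const _), ContinuousLinearMap.sum_apply]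
  have : ∑ j, (fderiv ℝ (fun y => g y i j * p j) x) (Pi.single i 1)
      = ∑ j, fderiv ℝ (fun y => g y i j) x (Pi.single i 1) * p j := by
    apply Finset.sum_congr rfl; intro j _
    rw [fderiv_mul_const (hg_diff i j x), ContinuousLinearMap.smul_apply, smul_eq_mul]; ring
  rw [this]
  ring

theorem Xp_poly {n : ℕ} (g : (Fin n → ℝ) → Fin n → Fin n → ℝ)
    (v : (Fin n → ℝ) → ℝ) (C : (Fin n → ℝ) → Fin n → Fin n → Fin n → ℝ)
    (f : (Fin n → ℝ) → Fin n → Fin n → ℝ)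
    (hg_diff : ∀ i j, Differentiable ℝ (fun x => g x i j))
    (hv_diff : Differentiable ℝ v) (x : Fin n → ℝ) (i : Fin n) :
    (fun q => XpField g v C f x q i)
      = fun q => (∑ j, ∑ k, (-(1/2 : ℝ) * fderiv ℝ (fun y => g y j k) x (Pi.single i 1)
            + ∑ l, C x j i l * g x l k) * q j * q k)
          + ((∑ j, (∑ l, f x i l * g x l j) * q j)
            + (-(fderiv ℝ v x (Pi.single i 1)))) := by
  funext q
  simp only [XpField, hpDeriv]
  rw [hx_eq g v hg_diff hv_diff x q i]
  set Gd : Fin n → Fin n → ℝ := fun j k => fderiv ℝ (fun y => g y j k) x (Pi.single i 1) with hGd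
  have e1 : ∑ j, ∑ k, (-(1/2 : ℝ) * Gd j k + ∑ l, C x j i l * g x l k) * q j * q k
      = -(1/2 : ℝ) * (∑ j, ∑ k, Gd j k * q j * q k)
        + ∑ j, ∑ l, C x j i l * q j * (∑ k, g x l k * q k) := by
    have hleaf : ∀ j k, (-(1/2 : ℝ) * Gd j k + ∑ l, C x j i l * g x l k) * q j * q k
        = -(1/2 : ℝ) * (Gd j k * q j * q k) + (∑ l, C x j i l * g x l k) * q j * q k := by
      intro j k; ring
    simp only [hleaf, Finset.sum_add_distrib, ← Finset.mul_sum]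
    congr 1
    apply Finset.sum_congr rfl; intro j _
    calc ∑ k, (∑ l, C x j i l * g x l k) * q j * q k
        = ∑ k, ∑ l, C x j i l * g x l k * q j * q k := by
          apply Finset.sum_congr rfl; intro k _; rw [Finset.sum_mul, Finset.sum_mul]
      _ = ∑ l, ∑ k, C x j i l * g x l k * q j * q k := Finset.sum_comm
      _ = ∑ l, C x j i l * q j * (∑ k, g x l k * q k) := by
          apply Finset.sum_congr rfl; intro l _
          rw [Finset.mul_sum]
          apply Finset.sum_congr rfl; intro k _; ring
  have e2 : ∑ j, (∑ l, f x i l * g x l j) * q j = ∑ l, f x i l * (∑ j, g x l j * q j) := by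
    calc ∑ j, (∑ l, f x i l * g x l j) * q j = ∑ j, ∑ l, f x i l * g x l j * q j := by
          apply Finset.sum_congr rfl; intro j _; rw [Finset.sum_mul]
      _ = ∑ l, ∑ j, f x i l * g x l j * q j := Finset.sum_comm
      _ = ∑ l, f x i l * (∑ j, g x l j * q j) := by
          apply Finset.sum_congr rfl; intro l _
          rw [Finset.mul_sum]
          apply Finset.sum_congr rfl; intro j _; ring
  rw [e1, e2]
  ring

theorem Xp_diff {n : ℕ} (g : (Fin n → ℝ) → Fin n → Fin n → ℝ)
    (v : (Fin n → ℝ) → ℝ) (C : (Fin n → ℝ) → Fin n → Fin n → Fin n → ℝ)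
    (f : (Fin n → ℝ) → Fin n → Fin n → ℝ)
    (hg_diff : ∀ i j, Differentiable ℝ (fun x => g x i j))
    (hv_diff : Differentiable ℝ v) (x p : Fin n → ℝ) (i : Fin n) :
    DifferentiableAt ℝ (fun q => XpField g v C f x q i) p := by
  rw [Xp_poly g v C f hg_diff hv_diff x i]
  exact (quadDiff' _ p).add ((linDiff' _ p).add_const _)

theorem ppart_eq {n : ℕ} (g : (Fin n → ℝ) → Fin n → Fin n → ℝ)
    (v : (Fin n → ℝ) → ℝ) (C : (Fin n → ℝ) → Fin n → Fin n → Fin n → ℝ)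
    (f : (Fin n → ℝ) → Fin n → Fin n → ℝ)
    (hg_sym : ∀ x i j, g x i j = g x j i)
    (hg_diff : ∀ i j, Differentiable ℝ (fun x => g x i j))
    (hv_diff : Differentiable ℝ v) (x p : Fin n → ℝ) (i : Fin n) :
    fderiv ℝ (fun q => XpField g v C f x q i) p (Pi.single i 1)
      = -(∑ j, fderiv ℝ (fun y => g y i j) x (Pi.single i 1) * p j)
        + (∑ l, C x i i l * hpDeriv g x p l)
        + (∑ j, (∑ l, C x j i l * g x l i) * p j)
        + ∑ l, f x i l * g x l i := by
  set Gd : Fin n → Fin n → ℝ := fun j k => fderiv ℝ (fun y => g y j k) x (Pi.single i 1) with hGd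
  rw [Xp_poly g v C f hg_diff hv_diff x i,
    fderiv_fun_add (quadDiff' _ p) ((linDiff' _ p).add_const _),
    ContinuousLinearMap.add_apply, fderiv_add_const, quadDeriv', linDeriv']
  have hGsym : ∀ j k, Gd j k = Gd k j := by
    intro j k
    rw [hGd]
    have : (fun y => g y j k) = (fun y => g y k j) := funext fun y => hg_sym y j k
    simp only [this]
  have s1 : ∑ k, (-(1/2 : ℝ) * Gd i k + ∑ l, C x i i l * g x l k) * p k
      = -(1/2 : ℝ) * (∑ k, Gd i k * p k) + ∑ l, C x i i l * hpDeriv g x p l := by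
    have hleaf : ∀ k, (-(1/2 : ℝ) * Gd i k + ∑ l, C x i i l * g x l k) * p k
        = -(1/2 : ℝ) * (Gd i k * p k) + (∑ l, C x i i l * g x l k) * p k := by
      intro k; ring
    simp only [hleaf, Finset.sum_add_distrib, ← Finset.mul_sum]
    congr 1
    calc ∑ k, (∑ l, C x i i l * g x l k) * p k
        = ∑ k, ∑ l, C x i i l * g x l k * p k := by
          apply Finset.sum_congr rfl; intro k _; rw [Finset.sum_mul]
      _ = ∑ l, ∑ k, C x i i l * g x l k * p k := Finset.sum_comm
      _ = ∑ l, C x i i l * hpDeriv g x p l := by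
          apply Finset.sum_congr rfl; intro l _
          rw [hpDeriv, Finset.mul_sum]
          apply Finset.sum_congr rfl; intro k _; ring
  have s2 : ∑ j, (-(1/2 : ℝ) * Gd j i + ∑ l, C x j i l * g x l i) * p j
      = -(1/2 : ℝ) * (∑ j, Gd i j * p j) + ∑ j, (∑ l, C x j i l * g x l i) * p j := by
    have hleaf : ∀ j, (-(1/2 : ℝ) * Gd j i + ∑ l, C x j i l * g x l i) * p j
        = -(1/2 : ℝ) * (Gd i j * p j) + (∑ l, C x j i l * g x l i) * p j := by
      intro j; rw [hGsym j i]; ring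
    simp only [hleaf, Finset.sum_add_distrib, ← Finset.mul_sum]
  rw [s1, s2]
  ring

theorem keyformula {n : ℕ}
    (g : (Fin n → ℝ) → Fin n → Fin n → ℝ)
    (v ν : (Fin n → ℝ) → ℝ)
    (C : (Fin n → ℝ) → Fin n → Fin n → Fin n → ℝ)
    (f : (Fin n → ℝ) → Fin n → Fin n → ℝ)
    (hg_sym : ∀ x i j, g x i j = g x j i)
    (hg_diff : ∀ i j, Differentiable ℝ (fun x => g x i j))
    (hv_diff : Differentiable ℝ v)
    (hν_diff : Differentiable ℝ ν)
    (hC_skew : ∀ x k i j, C x k i j = -C x k j i)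
    (hf_skew : ∀ x i j, f x i j = -f x j i) (x p : Fin n → ℝ) :
    divNuX g v ν C f x p
      = ∑ i, (fderiv ℝ ν x (Pi.single i 1) - ν x * ∑ j, C x j i j)
          * hpDeriv g x p i := by
  have hp' : ∀ i : Fin n, fderiv ℝ (fun q => ν x * XpField g v C f x q i) p (Pi.single i 1)
      = ν x * (-(∑ j, fderiv ℝ (fun y => g y i j) x (Pi.single i 1) * p j)
          + (∑ l, C x i i l * hpDeriv g x p l)
          + (∑ j, (∑ l, C x j i l * g x l i) * p j)
          + ∑ l, f x i l * g x l i) := by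
    intro i
    rw [fderiv_const_mul (Xp_diff g v C f hg_diff hv_diff x p i),
      ContinuousLinearMap.smul_apply, smul_eq_mul,
      ppart_eq g v C f hg_sym hg_diff hv_diff x p i]
  unfold divNuX
  rw [Finset.sum_congr rfl fun i _ => xpart_eq g ν hg_diff hν_diff x p i,
    Finset.sum_congr rfl fun i _ => hp' i]
  have hVsum : ∑ i : Fin n, ∑ j, (∑ l, C x j i l * g x l i) * p j = 0 := by
    rw [Finset.sum_comm]
    apply Finset.sum_eq_zero; intro j _
    rw [← Finset.sum_mul]
    have : ∑ i : Fin n, ∑ l, C x j i l * g x l i = 0 := by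
      apply sum_skew'
      intro i l
      rw [hC_skew x j i l, hg_sym x l i]
      ring
    rw [this, zero_mul]
  have hWsum : ∑ i : Fin n, ∑ l, f x i l * g x l i = 0 := by
    apply sum_skew'
    intro i l
    rw [hf_skew x i l, hg_sym x l i]
    ring
  have hUsum : ∑ i : Fin n, ∑ l, C x i i l * hpDeriv g x p l
      = -∑ i, (∑ j, C x j i j) * hpDeriv g x p i := by
    calc ∑ i : Fin n, ∑ l, C x i i l * hpDeriv g x p l
        = ∑ l : Fin n, ∑ i, C x i i l * hpDeriv g x p l := Finset.sum_comm
      _ = ∑ l : Fin n, (∑ i, C x i i l) * hpDeriv g x p l := by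
          apply Finset.sum_congr rfl; intro l _; rw [Finset.sum_mul]
      _ = -∑ i, (∑ j, C x j i j) * hpDeriv g x p i := by
          rw [← Finset.sum_neg_distrib]
          apply Finset.sum_congr rfl; intro i _
          have h1 : ∑ j, C x j j i = -∑ j, C x j i j := by
            rw [← Finset.sum_neg_distrib]
            exact Finset.sum_congr rfl fun j _ => hC_skew x j j i
          rw [h1]; ring
  have hR : ∑ i, (fderiv ℝ ν x (Pi.single i 1) - ν x * ∑ j, C x j i j) * hpDeriv g x p i
      = ∑ i, fderiv ℝ ν x (Pi.single i 1) * hpDeriv g x p i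
        - ν x * ∑ i, (∑ j, C x j i j) * hpDeriv g x p i := by
    rw [Finset.mul_sum, ← Finset.sum_sub_distrib]
    exact Finset.sum_congr rfl fun i _ => by ring
  rw [Finset.sum_add_distrib]
  simp only [mul_add, mul_neg, Finset.sum_add_distrib, Finset.sum_neg_distrib]
  simp only [← Finset.mul_sum]
  rw [hUsum, hVsum, hWsum, hR]
  ring

/-- the divergence of `νX` equals
`Σᵢ (∂ν/∂xᵢ - ν Σⱼ C^j_{ij}) ∂h/∂pᵢ`; consequently `νX` is divergence-free
for all momenta iff `∂(ln ν)/∂xᵢ = Σⱼ C^j_{ij}(x)` for all `i`, i.e.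
`∂ν/∂xᵢ = ν Σⱼ C^j_{ij}`. -/
theorem divergence_invariant_measure {n : ℕ}
    (g : (Fin n → ℝ) → Fin n → Fin n → ℝ)
    (v ν : (Fin n → ℝ) → ℝ)
    (C : (Fin n → ℝ) → Fin n → Fin n → Fin n → ℝ)
    (f : (Fin n → ℝ) → Fin n → Fin n → ℝ)
    (hg_sym : ∀ x i j, g x i j = g x j i)
    (hg_pos : ∀ x, (Matrix.of (g x)).PosDef)
    (hg_diff : ∀ i j, Differentiable ℝ (fun x => g x i j))
    (hv_diff : Differentiable ℝ v)
    (hν_diff : Differentiable ℝ ν) (hν_pos : ∀ x, 0 < ν x)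
    (hC_skew : ∀ x k i j, C x k i j = -C x k j i)
    (hf_skew : ∀ x i j, f x i j = -f x j i) :
    (∀ x p, divNuX g v ν C f x p
      = ∑ i, (fderiv ℝ ν x (Pi.single i 1) - ν x * ∑ j, C x j i j)
          * hpDeriv g x p i) ∧
    ((∀ x p, divNuX g v ν C f x p = 0) ↔
      (∀ x i, fderiv ℝ (fun y => Real.log (ν y)) x (Pi.single i 1)
        = ∑ j, C x j i j)) := by
  have key := keyformula g v ν C f hg_sym hg_diff hv_diff hν_diff hC_skew hf_skew
  refine ⟨key, ?_, ?_⟩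
  · -- div = 0 → log condition
    intro hdiv x i
    set a : Fin n → ℝ := fun i => fderiv ℝ ν x (Pi.single i 1) - ν x * ∑ j, C x j i j with ha
    have h0 : ∑ i', a i' * hpDeriv g x a i' = 0 := by
      rw [← key x a]; exact hdiv x a
    have hzero : a = 0 := by
      by_contra hne
      have hpos := (hg_pos x).dotProduct_mulVec_pos hne
      have : (0:ℝ) < ∑ i', a i' * hpDeriv g x a i' := by
        simpa [hpDeriv, dotProduct, Matrix.mulVec, Matrix.of_apply] using hpos
      linarith
    have hai : a i = 0 := congrFun hzero i
    have hDν : fderiv ℝ ν x (Pi.single i 1) = ν x * ∑ j, C x j i j := by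
      rw [ha] at hai; simpa [sub_eq_zero] using hai
    have hν0 : ν x ≠ 0 := ne_of_gt (hν_pos x)
    have hlog : fderiv ℝ (fun y => Real.log (ν y)) x (Pi.single i 1)
        = (ν x)⁻¹ * fderiv ℝ ν x (Pi.single i 1) := by
      have h := (Real.hasDerivAt_log hν0).comp_hasFDerivAt x (hν_diff x).hasFDerivAt
      rw [show (fun y => Real.log (ν y)) = Real.log ∘ ν from rfl, h.fderiv]
      simp
    rw [hlog, hDν, ← mul_assoc, inv_mul_cancel₀ hν0, one_mul]
  · -- log condition → div = 0
    intro hcond x p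
    rw [key x p]
    apply Finset.sum_eq_zero; intro i _
    have hν0 : ν x ≠ 0 := ne_of_gt (hν_pos x)
    have hlog : fderiv ℝ (fun y => Real.log (ν y)) x (Pi.single i 1)
        = (ν x)⁻¹ * fderiv ℝ ν x (Pi.single i 1) := by
      have h := (Real.hasDerivAt_log hν0).comp_hasFDerivAt x (hν_diff x).hasFDerivAt
      rw [show (fun y => Real.log (ν y)) = Real.log ∘ ν from rfl, h.fderiv]
      simp
    have := hcond x i
    rw [hlog] at this
    have hDν : fderiv ℝ ν x (Pi.single i 1) = ν x * ∑ j, C x j i j := by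
      field_simp at this
      linarith
    rw [hDν, sub_self, zero_mul]
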